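/- Let a < 0 be an integer and y(q) the formal power series solution of y(y+1)^a = q with y(0)=0. Then 1/(1+y(q)) = B_{-a}(q)^{-1}, where B_b(q) = Σ_{n≥0} C_{n,b} q^n is the generating series of Fuss-Catalan numbers. -/

import Mathlib

open PowerSeries

/-- The Fuss–Catalan numbers `C_{n,b} = (1/(bn+1)) * choose (bn+1) n` as rationals. -/
noncomputable def fussCatalan (n b : ℕ) : ℚ :=
  (1 / (b * n + 1 : ℚ)) * (Nat.choose (b * n + 1) n : ℚ)

/-- The generating series `B_b(q) = Σ_{n≥0} C_{n,b} q^n` of Fuss–Catalan numbers. -/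
noncomputable def fussCatalanSeries (b : ℕ) : PowerSeries ℚ :=
  PowerSeries.mk fun n => fussCatalan n b

open Finset

/-- `Aq c x n = x/(x+(c+1)n) * C(x+(c+1)n, n)`, with the convention `Aq c 0 0 = 1`. -/
noncomputable def Aq (c x n : ℕ) : ℚ :=
  if x = 0 ∧ n = 0 then 1
  else (x : ℚ) / (x + (c + 1) * n) * (Nat.choose (x + (c + 1) * n) n : ℚ)

lemma Aq_zero_right (c x : ℕ) : Aq c x 0 = 1 := by
  rcases Nat.eq_zero_or_pos x with h | h
  · simp [Aq, h]
  · have hx : (x : ℚ) ≠ 0 := by positivity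
    simp [Aq, Nat.pos_iff_ne_zero.mp h, div_mul_eq_mul_div, mul_comm]

lemma Aq_zero_left (c n : ℕ) (hn : n ≠ 0) : Aq c 0 n = 0 := by
  simp [Aq, hn]

lemma Aq_fact (c x n : ℕ) :
    Aq c (x + 1) n =
      ((x + 1 : ℚ) * (x + (c + 1) * n).factorial) /
        (n.factorial * (x + 1 + c * n).factorial) := by
  have hcn : (c + 1) * n = c * n + n := by ring
  have h1 : n ≤ x + 1 + (c + 1) * n := by omega
  have h2 : (x + 1 + (c + 1) * n) - n = x + 1 + c * n := by omega
  rw [Aq, if_neg (by simp)]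
  rw [Nat.cast_choose ℚ h1, h2]
  have h3 : x + 1 + (c + 1) * n = (x + (c + 1) * n) + 1 := by omega
  rw [h3, Nat.factorial_succ]
  have hf1 : ((x + (c+1)*n + 1 : ℕ) : ℚ) ≠ 0 := by positivity
  have hf2 : ((x + (c+1)*n).factorial : ℚ) ≠ 0 := by positivity
  have hf3 : ((n.factorial : ℚ)) ≠ 0 := by positivity
  have hf4 : (((x + 1 + c*n).factorial : ℚ)) ≠ 0 := by positivity
  push_cast
  field_simp
  ring

lemma Aq_pascal (c x n : ℕ) :
    Aq c (x + 1) (n + 1) = Aq c x (n + 1) + Aq c (x + 1 + c) n := by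
  have hfn : ((n.factorial : ℚ)) ≠ 0 := by positivity
  cases x with
  | zero =>
    rw [Aq_zero_left c (n+1) (Nat.succ_ne_zero n), zero_add]
    have h1c : (0:ℕ) + 1 + c = c + 1 := by omega
    rw [h1c]
    rw [show (1:ℕ) = 0 + 1 from rfl, Aq_fact c 0 (n+1), Aq_fact c c n]
    have h1 : (0:ℕ) + (c + 1) * (n + 1) = (c + (c+1)*n) + 1 := by ring
    have h2 : (0:ℕ) + 1 + c * (n + 1) = c + 1 + c * n := by ring
    rw [h1, h2, Nat.factorial_succ, Nat.factorial_succ n]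
    have hA : (((c + (c+1)*n).factorial : ℚ)) ≠ 0 := by positivity
    have hB : (((c + 1 + c*n).factorial : ℚ)) ≠ 0 := by positivity
    field_simp
    push_cast
    ring
  | succ y =>
    rw [show y + 1 + 1 = (y + 1) + 1 from rfl, Aq_fact c (y+1) (n+1),
      Aq_fact c y (n+1), show y + 1 + 1 + c = (y + 1 + c) + 1 by omega,
      Aq_fact c (y+1+c) n]
    have h1 : y + 1 + (c + 1) * (n + 1) = (y + (c+1)*(n+1)) + 1 := by ring
    have h2 : y + 1 + 1 + c * (n + 1) = (y + 1 + c*(n+1)) + 1 := by ring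
    have h3 : y + 1 + c + (c + 1) * n = y + (c+1)*(n+1) := by ring
    have h4 : y + 1 + c + 1 + c * n = (y + 1 + c*(n+1)) + 1 := by ring
    rw [h1, h2, h3, h4, Nat.factorial_succ (y + (c+1)*(n+1)),
      Nat.factorial_succ (y + 1 + c*(n+1)), Nat.factorial_succ n]
    have hA : (((y + (c+1)*(n+1)).factorial : ℚ)) ≠ 0 := by positivity
    have hB : (((y + 1 + c*(n+1)).factorial : ℚ)) ≠ 0 := by positivity
    have hAB : y + (c+1)*(n+1) = (y + 1 + c*(n+1)) + n := by ring
    field_simp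
    push_cast [hAB]
    ring

lemma Aq_conv (c : ℕ) : ∀ n x, (∑ i ∈ range (n+1), Aq c 1 i * Aq c x (n - i)) = Aq c (x+1) n := by
  intro n
  induction n with
  | zero => intro x; simp [Aq_zero_right]
  | succ n IH =>
    intro x
    induction x with
    | zero =>
      rw [Finset.sum_range_succ]
      rw [Nat.sub_self, Aq_zero_right, mul_one, zero_add]
      rw [Finset.sum_eq_zero, zero_add]
      intro i hi
      rw [Finset.mem_range] at hi
      rw [Aq_zero_left c _ (by omega), mul_zero]
    | succ x IHx =>
      have peel : ∑ i ∈ range (n+1+1), Aq c 1 i * Aq c (x+1) (n+1-i)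
          = (∑ i ∈ range (n+1), Aq c 1 i * Aq c (x+1) (n+1-i))
            + Aq c 1 (n+1) * Aq c (x+1) 0 := by
        rw [Finset.sum_range_succ, Nat.sub_self]
      have split : ∀ i ∈ range (n+1), Aq c 1 i * Aq c (x+1) (n+1-i)
          = Aq c 1 i * Aq c x (n+1-i) + Aq c 1 i * Aq c (x+1+c) (n-i) := by
        intro i hi
        rw [Finset.mem_range] at hi
        have h : n + 1 - i = (n - i) + 1 := by omega
        have h2 : n - i + 1 = n + 1 - i := by omega
        rw [h, Aq_pascal, mul_add, h2]
      rw [peel, Finset.sum_congr rfl split, Finset.sum_add_distrib]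
      rw [IH (x+1+c)]
      rw [Aq_zero_right, mul_one]
      have recomb : (∑ i ∈ range (n+1), Aq c 1 i * Aq c x (n+1-i)) + Aq c 1 (n+1)
          = ∑ i ∈ range (n+1+1), Aq c 1 i * Aq c x (n+1-i) := by
        rw [Finset.sum_range_succ (fun i => Aq c 1 i * Aq c x (n+1-i)) (n+1),
          Nat.sub_self, Aq_zero_right, mul_one]
      have final : Aq c (x+1+1) (n+1) = Aq c (x+1) (n+1) + Aq c (x+1+c+1) n := by
        rw [Aq_pascal]
        congr 1
        rw [show x + 1 + 1 + c = x + 1 + c + 1 by omega]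
      rw [final, ← IHx, ← recomb]
      ring

lemma fc_eq_Aq (c n : ℕ) : fussCatalan n (c+1) = Aq c 1 n := by
  rw [fussCatalan, Aq, if_neg (by simp)]
  have h : 1 + (c+1) * n = (c+1) * n + 1 := by rw [Nat.add_comm]
  rw [h]
  push_cast
  ring

lemma Aq_ratio (c n : ℕ) :
    ((2 : ℚ) + c * n) * Aq c 2 n = 2 * ((c+1) * n + 1) * Aq c 1 n := by
  rw [show (2:ℕ) = 1 + 1 from rfl, Aq_fact c 1 n, show (1:ℕ) = 0 + 1 from rfl,
    Aq_fact c 0 n]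
  have h1 : 1 + (c+1) * n = (0 + (c+1)*n) + 1 := by omega
  have h2 : 1 + 1 + c * n = (0 + 1 + c*n) + 1 := by omega
  rw [h1, h2, Nat.factorial_succ, Nat.factorial_succ]
  have hA : (((0 + (c+1)*n).factorial : ℚ)) ≠ 0 := by positivity
  have hB : (((0 + 1 + c*n).factorial : ℚ)) ≠ 0 := by positivity
  have hfn : ((n.factorial : ℚ)) ≠ 0 := by positivity
  field_simp
  push_cast
  ring

lemma L2full (c n : ℕ) :
    ∑ i ∈ range (n+1),
        fussCatalan i (c+1) * fussCatalan (n-i) (c+1) * (1 + (c:ℚ) * (n-i : ℕ))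
      = (((c:ℚ)+1) * n + 1) * fussCatalan n (c+1) := by
  set f : ℕ → ℚ := fun i =>
    fussCatalan i (c+1) * fussCatalan (n-i) (c+1) * (1 + (c:ℚ) * (n-i : ℕ)) with hf
  have hrefl : ∑ i ∈ range (n+1), f i
      = ∑ i ∈ range (n+1), fussCatalan (n-i) (c+1) * fussCatalan i (c+1)
          * (1 + (c:ℚ) * i) := by
    rw [← Finset.sum_range_reflect f (n+1)]
    apply Finset.sum_congr rfl
    intro i hi
    rw [Finset.mem_range] at hi
    have h1 : n + 1 - 1 - i = n - i := by omega
    have h2 : n - (n - i) = i := by omega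
    simp only [hf, h1, h2]
  have two_mul_sum : (2:ℚ) * ∑ i ∈ range (n+1), f i
      = ((2:ℚ) + c * n) * ∑ i ∈ range (n+1), Aq c 1 i * Aq c 1 (n - i) := by
    rw [two_mul]
    nth_rewrite 2 [hrefl]
    rw [← Finset.sum_add_distrib, Finset.mul_sum]
    apply Finset.sum_congr rfl
    intro i hi
    rw [Finset.mem_range] at hi
    have hcast : ((n - i : ℕ) : ℚ) = (n : ℚ) - i := by
      rw [Nat.cast_sub (by omega)]
    simp only [hf, ← fc_eq_Aq]
    rw [hcast]
    ring
  have h2 : (2:ℚ) * ∑ i ∈ range (n+1), f i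
      = 2 * ((((c:ℚ)+1) * n + 1) * fussCatalan n (c+1)) := by
    rw [two_mul_sum, Aq_conv c n 1, Aq_ratio, fc_eq_Aq]
    push_cast
    ring
  have := mul_left_cancel₀ (two_ne_zero (α := ℚ)) h2
  simpa [hf] using this

noncomputable def eFC (c k : ℕ) : ℚ := if k = 0 then 0 else fussCatalan k (c+1)

lemma fc_zero (c : ℕ) : fussCatalan 0 (c+1) = 1 := by
  simp [fussCatalan]

lemma key (c n : ℕ) (hn : 2 ≤ n) :
    ∑ i ∈ range (n+1), eFC c i * eFC c (n-i) * (1 + (c:ℚ) * (n-i : ℕ))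
      = ((n:ℚ) - 1) * fussCatalan n (c+1) := by
  obtain ⟨m, rfl⟩ : ∃ m, n = m + 2 := ⟨n - 2, by omega⟩
  have peel : ∀ g : ℕ → ℚ, ∑ i ∈ range (m+3), g i
      = g 0 + (∑ i ∈ range (m+1), g (i+1)) + g (m+2) := by
    intro g
    rw [Finset.sum_range_succ, Finset.sum_range_succ']
    ring
  have he := peel (fun i => eFC c i * eFC c (m+2-i) * (1 + (c:ℚ) * (m+2-i : ℕ)))
  have hf := peel (fun i =>
    fussCatalan i (c+1) * fussCatalan (m+2-i) (c+1) * (1 + (c:ℚ) * (m+2-i : ℕ)))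
  have hmid : ∀ i ∈ range (m+1),
      eFC c (i+1) * eFC c (m+2-(i+1)) * (1 + (c:ℚ) * (m+2-(i+1) : ℕ))
      = fussCatalan (i+1) (c+1) * fussCatalan (m+2-(i+1)) (c+1)
          * (1 + (c:ℚ) * (m+2-(i+1) : ℕ)) := by
    intro i hi
    rw [Finset.mem_range] at hi
    rw [eFC, if_neg (by omega), eFC, if_neg (by omega)]
  have hL2 := L2full c (m+2)
  rw [hf] at hL2
  rw [show m + 2 + 1 = m + 3 from rfl, he, Finset.sum_congr rfl hmid]
  have e0 : eFC c 0 = 0 := if_pos rfl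
  have e2 : eFC c (m+2) = fussCatalan (m+2) (c+1) := if_neg (by omega)
  rw [Nat.sub_self, Nat.sub_zero, e0, e2, fc_zero] at *
  push_cast at hL2 ⊢
  linear_combination hL2

open PowerSeries

lemma fc_one (c : ℕ) : fussCatalan 1 (c+1) = 1 := by
  rw [fussCatalan]
  rw [Nat.mul_one, Nat.choose_one_right]
  have : ((c:ℚ) + 1 + 1) ≠ 0 := by positivity
  push_cast
  field_simp

theorem one_add_eq_fussCatalanSeries (a : ℤ) (ha : a < 0) (y : PowerSeries ℚ)
    (h0 : constantCoeff y = 0) (hy : y = X * (1 + y) ^ (-a).toNat) :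
    (1 + y) = fussCatalanSeries (-a).toNat := by
  rw [fussCatalanSeries]
  obtain ⟨c, hb⟩ : ∃ c, (-a).toNat = c + 1 := ⟨(-a).toNat - 1, by omega⟩
  rw [hb] at hy ⊢
  set d : ℕ → ℚ := fun n => coeff n y with hd
  -- derivative equation
  have hD : d⁄dX ℚ y = (1+y)^(c+1) + ((c : ℚ⟦X⟧)+1) * (X * ((1+y)^c * d⁄dX ℚ y)) := by
    conv_lhs => rw [hy]
    rw [Derivation.leibniz, Derivation.leibniz_pow]
    simp only [derivative_X, map_add, Derivation.map_one_eq_zero, zero_add,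
      Nat.add_sub_cancel, smul_eq_mul, nsmul_eq_mul, mul_one]
    push_cast
    ring
  have hE : X * (1+y) * d⁄dX ℚ y
      = y * (1+y) + ((c : ℚ⟦X⟧)+1) * (X * (y * d⁄dX ℚ y)) := by
    calc X * (1+y) * d⁄dX ℚ y
        = X * (1+y) * ((1+y)^(c+1) + ((c : ℚ⟦X⟧)+1) * (X * ((1+y)^c * d⁄dX ℚ y))) := by
          rw [← hD]
      _ = (X * (1+y)^(c+1)) * (1+y)
          + ((c : ℚ⟦X⟧)+1) * (X * ((X * (1+y)^(c+1)) * d⁄dX ℚ y)) := by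
          rw [pow_succ]; ring
      _ = y * (1+y) + ((c : ℚ⟦X⟧)+1) * (X * (y * d⁄dX ℚ y)) := by rw [← hy]
  have hcast : ((c : ℚ⟦X⟧)+1) = C ((c:ℚ)+1) := by
    simp [map_add, map_natCast]
  have hE2 : (X * d⁄dX ℚ y) + y * (X * d⁄dX ℚ y)
      = y + y * y + C ((c:ℚ)+1) * (y * (X * d⁄dX ℚ y)) := by
    rw [← hcast]
    linear_combination hE
  have hw : ∀ n : ℕ, coeff n (X * d⁄dX ℚ y) = n * d n := by
    intro n
    cases n with
    | zero => simp
    | succ k =>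
      rw [coeff_succ_X_mul, coeff_derivative]
      push_cast
      ring
  have hR : ∀ n : ℕ, (n:ℚ) * d n
      = d n + ∑ i ∈ Finset.range (n+1), d i * d (n-i) * (1 + (c:ℚ) * (n-i : ℕ)) := by
    intro n
    have hc := congrArg (coeff n) hE2
    rw [map_add, map_add, map_add, coeff_C_mul] at hc
    simp only [coeff_mul, hw,
      Finset.Nat.sum_antidiagonal_eq_sum_range_succ_mk] at hc
    have hsplit : ∑ i ∈ Finset.range (n+1), d i * d (n-i) * (1 + (c:ℚ) * (n-i : ℕ))
        = (∑ i ∈ Finset.range (n+1), d i * d (n-i))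
          + (c:ℚ) * ∑ i ∈ Finset.range (n+1), d i * ((n-i : ℕ) * d (n-i)) := by
      rw [Finset.mul_sum, ← Finset.sum_add_distrib]
      exact Finset.sum_congr rfl fun i _ => by ring
    rw [hsplit]
    linear_combination hc
  have hd0 : d 0 = 0 := by
    show (coeff 0) y = 0
    rw [PowerSeries.coeff_zero_eq_constantCoeff]; exact h0
  have hd1 : d 1 = 1 := by
    have := congrArg (coeff 1) hy
    rw [show (1:ℕ) = 0 + 1 from rfl, coeff_succ_X_mul,
      PowerSeries.coeff_zero_eq_constantCoeff, map_pow, map_add, map_one, h0] at this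
    simpa using this
  have claim : ∀ n : ℕ, d n = eFC c n := by
    intro n
    induction n using Nat.strong_induction_on with
    | _ n IH =>
      match n with
      | 0 => rw [hd0, eFC, if_pos rfl]
      | 1 => rw [hd1, eFC, if_neg one_ne_zero, fc_one]
      | (m+2) =>
        set n := m + 2 with hn
        have hterm : ∀ i ∈ Finset.range (n+1),
            d i * d (n-i) * (1 + (c:ℚ) * (n-i : ℕ))
            = eFC c i * eFC c (n-i) * (1 + (c:ℚ) * (n-i : ℕ)) := by
          intro i hi
          rw [Finset.mem_range] at hi
          rcases Nat.eq_zero_or_pos i with h | h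
          · subst h
            have he0 : eFC c 0 = 0 := if_pos rfl
            rw [hd0, he0]
            ring
          · rcases Nat.eq_zero_or_pos (n - i) with h2 | h2
            · have he0 : eFC c 0 = 0 := if_pos rfl
              rw [h2, hd0, he0]
              ring
            · rw [IH i (by omega), IH (n-i) (by omega)]
        have hRn := hR n
        rw [Finset.sum_congr rfl hterm, key c n (by omega)] at hRn
        have hfc : d n * ((n:ℚ) - 1) = fussCatalan n (c+1) * ((n:ℚ) - 1) := by
          linear_combination hRn
        have hne : ((n:ℚ) - 1) ≠ 0 := by
          have : (2:ℚ) ≤ (n:ℚ) := by exact_mod_cast Nat.le_of_eq rfl |>.trans (by omega)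
          linarith
        have := mul_right_cancel₀ hne hfc
        rw [this, eFC, if_neg (by omega)]
  ext n
  cases n with
  | zero =>
    simp only [map_add, PowerSeries.coeff_zero_eq_constantCoeff, map_one, h0, coeff_mk]
    rw [fc_zero]
    norm_num
  | succ k =>
    rw [map_add, coeff_mk, PowerSeries.coeff_one, if_neg (Nat.succ_ne_zero k), zero_add]
    have := claim (k+1)
    rw [eFC, if_neg (Nat.succ_ne_zero k)] at this
    exact this

/-- For an integer `a < 0`, if `y(q)` is the formal power series solution with `y(0) = 0` of
`y(y+1)^a = q`, interpreted as `y = q·(1+y)^{-a}`, then `1/(1+y(q)) = B_{-a}(q)^{-1}`. -/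
theorem fussCatalan_lagrange_neg (a : ℤ) (ha : a < 0) (y : PowerSeries ℚ)
    (h0 : constantCoeff y = 0) (hy : y = X * (1 + y) ^ (-a).toNat) :
    (1 + y)⁻¹ = (fussCatalanSeries (-a).toNat)⁻¹ := by
  rw [one_add_eq_fussCatalanSeries a ha y h0 hy]
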